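/- arXiv:1109.5683 — 3 statements merged into one kernel-verified Lean document; each statement's English description precedes it below -/
import Mathlib

section
/- Fix an integer k ≥ 2. The probability that a uniformly random accessible transition structure on n states over a k-letter alphabet contains at least one three-state M-motif is o(n^{2-k}) as n → ∞, i.e., this probability divided by n^{2-k} tends to 0. -/
open scoped Classical BigOperators

namespace ArxivAutomata

/-- Extension of a transition structure to words: `run δ p u = δ(p, u)`. -/
def run {n k : ℕ} (δ : Fin n → Fin k → Fin n) (p : Fin n) (u : List (Fin k)) : Fin n :=
  u.foldl δ p

/-- A transition structure is accessible if every state is reachable from the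
initial state (the state with index 0, representing state 1). -/
def Accessible {n k : ℕ} (δ : Fin n → Fin k → Fin n) : Prop :=
  ∀ q : Fin n, ∃ u : List (Fin k), run δ ⟨0, Fin.pos q⟩ u = q

/-- The finite set of accessible transition structures on `n` states over a
`k`-letter alphabet. -/
noncomputable def accSet (n k : ℕ) : Finset (Fin n → Fin k → Fin n) :=
  Finset.univ.filter fun δ => Accessible δ

/-- Myhill–Nerode equivalence of two states. -/
def MNEquiv {n k : ℕ} (δ : Fin n → Fin k → Fin n) (T : Finset (Fin n)) (p q : Fin n) : Prop :=
  ∀ u : List (Fin k), run δ p u ∈ T ↔ run δ q u ∈ T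

/-- An automaton is minimal if Myhill–Nerode equivalent states are equal. -/
def Minimal {n k : ℕ} (δ : Fin n → Fin k → Fin n) (T : Finset (Fin n)) : Prop :=
  ∀ p q : Fin n, MNEquiv δ T p q → p = q

/-- `{i, j}` is an M-motif: `i ≠ j` and `δ_a(i) = δ_a(j)` for every letter `a`. -/
def IsMMotif {n k : ℕ} (δ : Fin n → Fin k → Fin n) (i j : Fin n) : Prop :=
  i ≠ j ∧ ∀ a : Fin k, δ i a = δ j a

/-- `{i, j, h}` is a three-state M-motif. -/
def IsM3Motif {n k : ℕ} (δ : Fin n → Fin k → Fin n) (i j h : Fin n) : Prop :=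
  i ≠ j ∧ i ≠ h ∧ j ≠ h ∧ ∀ a : Fin k, δ i a = δ j a ∧ δ j a = δ h a

/-- `δ` contains some three-state M-motif. -/
def HasM3 {n k : ℕ} (δ : Fin n → Fin k → Fin n) : Prop :=
  ∃ i j h, IsM3Motif δ i j h

/-- The number of M-motifs of `δ` (unordered pairs counted via `i < j`). -/
noncomputable def mCount {n k : ℕ} (δ : Fin n → Fin k → Fin n) : ℕ :=
  (Finset.univ.filter fun p : Fin n × Fin n =>
    p.1 < p.2 ∧ ∀ a : Fin k, δ p.1 a = δ p.2 a).card

/-- The number of three-state M-motifs of `δ` (unordered triples via `i < j < h`). -/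
noncomputable def m3Count {n k : ℕ} (δ : Fin n → Fin k → Fin n) : ℕ :=
  (Finset.univ.filter fun p : Fin n × Fin n × Fin n =>
    p.1 < p.2.1 ∧ p.2.1 < p.2.2 ∧
      ∀ a : Fin k, δ p.1 a = δ p.2.1 a ∧ δ p.2.1 a = δ p.2.2 a).card

/-- The Bernoulli measure of parameter `b` of a set of terminal states. -/
noncomputable def bern (b : ℝ) {n : ℕ} (T : Finset (Fin n)) : ℝ :=
  b ^ T.card * (1 - b) ^ (n - T.card)


/-- `q` is reachable from `p0` by some word of length `m`. -/
def RW {n k : ℕ} (δ : Fin n → Fin k → Fin n) (p0 q : Fin n) (m : ℕ) : Prop :=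
  ∃ l : List (Fin k), l.length = m ∧ run δ p0 l = q

lemma run_append {n k : ℕ} (δ : Fin n → Fin k → Fin n) (p : Fin n)
    (u v : List (Fin k)) : run δ p (u ++ v) = run δ (run δ p u) v :=
  List.foldl_append ..

lemma acc_RW {n k : ℕ} {δ : Fin n → Fin k → Fin n} (hA : Accessible δ)
    (p0 : Fin n) (h0 : p0.val = 0) : ∀ q, ∃ m, RW δ p0 q m := by
  intro q
  obtain ⟨u, hu⟩ := hA q
  have hp : p0 = ⟨0, Fin.pos q⟩ := Fin.ext h0
  exact ⟨u.length, u, rfl, by rw [hp]; exact hu⟩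

/-- Key lemma: replacing the rows of `v` and `w` (which share the row of `u`,
with `u` no farther from the start than `v, w`) preserves accessibility. -/
lemma key {n k : ℕ} (δ δ' : Fin n → Fin k → Fin n) (p0 : Fin n)
    (u v w : Fin n) (huv : u ≠ v) (huw : u ≠ w)
    (hδ' : ∀ p, p ≠ v → p ≠ w → δ' p = δ p)
    (hmin : ∀ m q, (q = v ∨ q = w) → RW δ p0 q m →
      (∃ m' ≤ m, RW δ p0 u m') ∧ δ q = δ u) :
    ∀ m q, RW δ p0 q m → ∃ l : List (Fin k), run δ' p0 l = q := by
  intro m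
  induction m using Nat.strong_induction_on with
  | _ m ih =>
    rintro q ⟨l, hlen, hrun⟩
    rcases List.eq_nil_or_concat l with rfl | ⟨xs, a, rfl⟩
    · exact ⟨[], hrun⟩
    · rw [List.concat_eq_append] at hrun hlen
      have hlen' : xs.length < m := by
        simp only [List.length_append, List.length_singleton] at hlen; omega
      set p := run δ p0 xs with hp
      have hq : δ p a = q := by
        rw [run_append] at hrun; exact hrun
      by_cases hpc : p = v ∨ p = w
      · obtain ⟨⟨m', hm', hRW⟩, hrow⟩ := hmin xs.length p hpc ⟨xs, rfl, rfl⟩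
        obtain ⟨l', hl'⟩ := ih m' (lt_of_le_of_lt hm' hlen') u hRW
        refine ⟨l' ++ [a], ?_⟩
        rw [run_append, hl']
        show δ' u a = q
        rw [hδ' u huv huw, ← hrow, hq]
      · push_neg at hpc
        obtain ⟨l', hl'⟩ := ih xs.length hlen' p ⟨xs, rfl, rfl⟩
        refine ⟨l' ++ [a], ?_⟩
        rw [run_append, hl']
        show δ' p a = q
        rw [hδ' p hpc.1 hpc.2, hq]

/-- Choice of an ordered motif triple `(u, v, w)` with `u` of minimal distance. -/
noncomputable def uvw {n k : ℕ} (δ : Fin n → Fin k → Fin n) (p0 : Fin n)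
    (h3 : HasM3 δ) (hacc : ∀ q, ∃ m, RW δ p0 q m) : Fin n × Fin n × Fin n :=
  if Nat.find (hacc h3.choose) ≤ Nat.find (hacc h3.choose_spec.choose) ∧
      Nat.find (hacc h3.choose) ≤ Nat.find (hacc h3.choose_spec.choose_spec.choose) then
    (h3.choose, h3.choose_spec.choose, h3.choose_spec.choose_spec.choose)
  else if Nat.find (hacc h3.choose_spec.choose) ≤
      Nat.find (hacc h3.choose_spec.choose_spec.choose) then
    (h3.choose_spec.choose, h3.choose, h3.choose_spec.choose_spec.choose)
  else
    (h3.choose_spec.choose_spec.choose, h3.choose, h3.choose_spec.choose)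

lemma uvw_spec {n k : ℕ} (δ : Fin n → Fin k → Fin n) (p0 : Fin n)
    (h3 : HasM3 δ) (hacc : ∀ q, ∃ m, RW δ p0 q m) :
    (uvw δ p0 h3 hacc).1 ≠ (uvw δ p0 h3 hacc).2.1 ∧
    (uvw δ p0 h3 hacc).1 ≠ (uvw δ p0 h3 hacc).2.2 ∧
    (uvw δ p0 h3 hacc).2.1 ≠ (uvw δ p0 h3 hacc).2.2 ∧
    δ (uvw δ p0 h3 hacc).2.1 = δ (uvw δ p0 h3 hacc).1 ∧
    δ (uvw δ p0 h3 hacc).2.2 = δ (uvw δ p0 h3 hacc).1 ∧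
    ∀ m q, (q = (uvw δ p0 h3 hacc).2.1 ∨ q = (uvw δ p0 h3 hacc).2.2) →
      RW δ p0 q m → ∃ m' ≤ m, RW δ p0 (uvw δ p0 h3 hacc).1 m' := by
  set i := h3.choose
  set j := h3.choose_spec.choose
  set l := h3.choose_spec.choose_spec.choose
  have hM : IsM3Motif δ i j l := h3.choose_spec.choose_spec.choose_spec
  obtain ⟨hij, hil, hjl, hrows⟩ := hM
  have hji : δ j = δ i := funext fun a => ((hrows a).1).symm
  have hli : δ l = δ i := funext fun a => ((hrows a).1.trans (hrows a).2).symm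
  have hfind : ∀ q m, RW δ p0 q m → Nat.find (hacc q) ≤ m :=
    fun q m h => Nat.find_min' (hacc q) h
  have hspec : ∀ q, RW δ p0 q (Nat.find (hacc q)) := fun q => Nat.find_spec (hacc q)
  rw [uvw]
  split_ifs with h1 h2
  · refine ⟨hij, hil, hjl, hji, hli, ?_⟩
    rintro m q (rfl | rfl) hr
    · exact ⟨Nat.find (hacc i), le_trans h1.1 (hfind _ _ hr), hspec i⟩
    · exact ⟨Nat.find (hacc i), le_trans h1.2 (hfind _ _ hr), hspec i⟩
  · push_neg at h1
    refine ⟨Ne.symm hij, hjl, hil, hji.symm, hli.trans hji.symm, ?_⟩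
    rintro m q (rfl | rfl) hr
    · have hji' : Nat.find (hacc j) ≤ Nat.find (hacc i) := by
        rcases le_or_gt (Nat.find (hacc i)) (Nat.find (hacc j)) with h | h
        · have := h1 h; omega
        · exact le_of_lt h
      exact ⟨Nat.find (hacc j), le_trans hji' (hfind _ _ hr), hspec j⟩
    · exact ⟨Nat.find (hacc j), le_trans h2 (hfind _ _ hr), hspec j⟩
  · push_neg at h1 h2
    refine ⟨Ne.symm hil, Ne.symm hjl, hij, hli.symm, hji.trans hli.symm, ?_⟩
    have hl_le_i : Nat.find (hacc l) ≤ Nat.find (hacc i) := by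
      rcases le_or_gt (Nat.find (hacc i)) (Nat.find (hacc j)) with h | h
      · have := h1 h; omega
      · omega
    rintro m q (rfl | rfl) hr
    · exact ⟨Nat.find (hacc l), le_trans hl_le_i (hfind _ _ hr), hspec l⟩
    · exact ⟨Nat.find (hacc l), le_trans (le_of_lt h2) (hfind _ _ hr), hspec l⟩

/-- The switching map: replace the rows of `v` and `w` by arbitrary rows. -/
noncomputable def Fmap {n k : ℕ}
    (x : (Fin n → Fin k → Fin n) × ((Fin k → Fin n) × (Fin k → Fin n))) :
    Fin n → Fin k → Fin n :=
  if h : HasM3 x.1 ∧ Accessible x.1 then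
    Function.update (Function.update x.1
      (uvw x.1 ⟨0, Fin.pos h.1.choose⟩ h.1 (acc_RW h.2 _ rfl)).2.1 x.2.1)
      (uvw x.1 ⟨0, Fin.pos h.1.choose⟩ h.1 (acc_RW h.2 _ rfl)).2.2 x.2.2
  else x.1

/-- The recovery map for the fiber counting. -/
noncomputable def Gmap {n k : ℕ}
    (x : (Fin n → Fin k → Fin n) × ((Fin k → Fin n) × (Fin k → Fin n))) :
    Option (Fin n × Fin n × Fin n) :=
  if h : HasM3 x.1 ∧ Accessible x.1 then
    some (uvw x.1 ⟨0, Fin.pos h.1.choose⟩ h.1 (acc_RW h.2 _ rfl))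
  else none

lemma recover {n k : ℕ}
    (x : (Fin n → Fin k → Fin n) × ((Fin k → Fin n) × (Fin k → Fin n)))
    (h : HasM3 x.1 ∧ Accessible x.1) :
    ∃ t : Fin n × Fin n × Fin n, Gmap x = some t ∧
      (∀ p, p ≠ t.2.1 → p ≠ t.2.2 → Fmap x p = x.1 p) ∧
      Fmap x t.2.1 = x.2.1 ∧ Fmap x t.2.2 = x.2.2 ∧
      t.1 ≠ t.2.1 ∧ t.1 ≠ t.2.2 ∧ t.2.1 ≠ t.2.2 ∧
      x.1 t.2.1 = x.1 t.1 ∧ x.1 t.2.2 = x.1 t.1 := by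
  refine ⟨uvw x.1 ⟨0, Fin.pos h.1.choose⟩ h.1 (acc_RW h.2 _ rfl), ?_, ?_, ?_, ?_, ?_⟩
  · rw [Gmap, dif_pos h]
  · intro p hpv hpw
    rw [Fmap, dif_pos h, Function.update_of_ne hpw, Function.update_of_ne hpv]
  · obtain ⟨h1, h2, h3, -⟩ := uvw_spec x.1 ⟨0, Fin.pos h.1.choose⟩ h.1 (acc_RW h.2 _ rfl)
    rw [Fmap, dif_pos h, Function.update_of_ne h3, Function.update_self]
  · rw [Fmap, dif_pos h, Function.update_self]
  · obtain ⟨h1, h2, h3, h4, h5, -⟩ :=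
      uvw_spec x.1 ⟨0, Fin.pos h.1.choose⟩ h.1 (acc_RW h.2 _ rfl)
    exact ⟨h1, h2, h3, h4, h5⟩

lemma main_count (n k : ℕ) :
    (((accSet n k).filter fun δ => HasM3 δ).card) * (n ^ k * n ^ k) ≤
      (n ^ 3 + 1) * (accSet n k).card := by
  classical
  set S := (accSet n k).filter fun δ => HasM3 δ with hS
  set s : Finset ((Fin n → Fin k → Fin n) × ((Fin k → Fin n) × (Fin k → Fin n))) :=
    S ×ˢ Finset.univ with hs
  have hmem : ∀ x ∈ s, HasM3 x.1 ∧ Accessible x.1 := by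
    intro x hx
    rw [hs, Finset.mem_product, hS, Finset.mem_filter] at hx
    have hacc : Accessible x.1 := by
      have := hx.1.1
      rw [accSet, Finset.mem_filter] at this
      exact this.2
    exact ⟨hx.1.2, hacc⟩
  have hmaps : ∀ x ∈ s, Fmap x ∈ accSet n k := by
    intro x hx
    have h := hmem x hx
    rw [Fmap, dif_pos h]
    set p0 : Fin n := ⟨0, Fin.pos h.1.choose⟩ with hp0
    set t := uvw x.1 p0 h.1 (acc_RW h.2 _ rfl) with ht
    obtain ⟨h1, h2, h3, hrv, hrw, hmin⟩ := uvw_spec x.1 p0 h.1 (acc_RW h.2 _ rfl)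
    rw [accSet, Finset.mem_filter]
    refine ⟨Finset.mem_univ _, ?_⟩
    intro q
    set δ' := Function.update (Function.update x.1 t.2.1 x.2.1) t.2.2 x.2.2 with hδ'
    have hoff : ∀ p, p ≠ t.2.1 → p ≠ t.2.2 → δ' p = x.1 p := by
      intro p hpv hpw
      rw [hδ', Function.update_of_ne hpw, Function.update_of_ne hpv]
    have hminrow : ∀ m q', (q' = t.2.1 ∨ q' = t.2.2) → RW x.1 p0 q' m →
        (∃ m' ≤ m, RW x.1 p0 t.1 m') ∧ x.1 q' = x.1 t.1 := by
      rintro m q' hq' hr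
      refine ⟨hmin m q' hq' hr, ?_⟩
      rcases hq' with rfl | rfl
      · exact hrv
      · exact hrw
    obtain ⟨m, hm⟩ := acc_RW h.2 p0 rfl q
    obtain ⟨lw, hlw⟩ := key x.1 δ' p0 t.1 t.2.1 t.2.2 h1 h2 hoff hminrow m q hm
    exact ⟨lw, hlw⟩
  have hfiber : ∀ b ∈ accSet n k, (s.filter fun x => Fmap x = b).card ≤ n ^ 3 + 1 := by
    intro b hb
    have hinj : Set.InjOn Gmap (↑(s.filter fun x => Fmap x = b) :
        Set ((Fin n → Fin k → Fin n) × ((Fin k → Fin n) × (Fin k → Fin n)))) := by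
      intro x hx y hy hgxy
      rw [Finset.coe_filter, Set.mem_setOf_eq] at hx hy
      obtain ⟨hxs, hFx⟩ := hx
      obtain ⟨hys, hFy⟩ := hy
      obtain ⟨t, hgx, hxoff, hxv, hxw, hx1, hx2, hx3, hxrv, hxrw⟩ := recover x (hmem x hxs)
      obtain ⟨t', hgy, hyoff, hyv, hyw, hy1, hy2, hy3, hyrv, hyrw⟩ := recover y (hmem y hys)
      have htt : t = t' := by
        rw [hgx, hgy] at hgxy
        exact Option.some_injective _ hgxy
      subst htt
      have hbu : x.1 t.1 = y.1 t.1 := by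
        rw [← hxoff t.1 hx1 hx2, ← hyoff t.1 hy1 hy2, hFx, hFy]
      have h11 : x.1 = y.1 := by
        funext p
        by_cases hpv : p = t.2.1
        · subst hpv; rw [hxrv, hyrv, hbu]
        · by_cases hpw : p = t.2.2
          · subst hpw; rw [hxrw, hyrw, hbu]
          · rw [← hxoff p hpv hpw, ← hyoff p hpv hpw, hFx, hFy]
      have h21 : x.2.1 = y.2.1 := by rw [← hxv, ← hyv, hFx, hFy]
      have h22 : x.2.2 = y.2.2 := by rw [← hxw, ← hyw, hFx, hFy]
      exact Prod.ext h11 (Prod.ext h21 h22)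
    calc (s.filter fun x => Fmap x = b).card
        ≤ (Finset.univ : Finset (Option (Fin n × Fin n × Fin n))).card :=
          Finset.card_le_card_of_injOn Gmap (fun _ _ => Finset.mem_univ _) hinj
      _ ≤ n ^ 3 + 1 := by
          rw [Finset.card_univ, Fintype.card_option, Fintype.card_prod,
            Fintype.card_prod, Fintype.card_fin]
          have : n * (n * n) = n ^ 3 := by ring
          omega
  have hcard : s.card = S.card * (n ^ k * n ^ k) := by
    rw [hs, Finset.card_product, Finset.card_univ, Fintype.card_prod,
      Fintype.card_fun, Fintype.card_fin, Fintype.card_fin]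
  calc S.card * (n ^ k * n ^ k) = s.card := hcard.symm
    _ ≤ (n ^ 3 + 1) * (accSet n k).card :=
        Finset.card_le_mul_card_image_of_maps_to hmaps _ hfiber

lemma accSet_card_pos (n k : ℕ) (hn : 1 ≤ n) (hk : 1 ≤ k) : 0 < (accSet n k).card := by
  apply Finset.card_pos.2
  refine ⟨fun p _ => ⟨(p.val + 1) % n, Nat.mod_lt _ hn⟩, ?_⟩
  rw [accSet, Finset.mem_filter]
  refine ⟨Finset.mem_univ _, ?_⟩
  intro q
  set δc : Fin n → Fin k → Fin n := fun p _ => ⟨(p.val + 1) % n, Nat.mod_lt _ hn⟩ with hδc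
  set a0 : Fin k := ⟨0, hk⟩ with ha0
  have step : ∀ m (hm : m < n), run δc ⟨0, Fin.pos q⟩ (List.replicate m a0) = ⟨m, hm⟩ := by
    intro m
    induction m with
    | zero => intro hm; rfl
    | succ m ih =>
      intro hm
      rw [List.replicate_succ', run_append, ih (by omega)]
      show δc ⟨m, _⟩ a0 = ⟨m + 1, hm⟩
      apply Fin.ext
      show (m + 1) % n = m + 1
      exact Nat.mod_eq_of_lt hm
  exact ⟨List.replicate q.val a0, (step q.val q.isLt).trans (Fin.ext rfl)⟩


/-- For `k ≥ 2`, the probability that a uniformly random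
accessible transition structure contains a three-state M-motif is `o(n^{2-k})`. -/
theorem statement6 (k : ℕ) (hk : 2 ≤ k) :
    Filter.Tendsto
      (fun n : ℕ =>
        ((((accSet n k).filter fun δ => HasM3 δ).card : ℝ) /
          ((accSet n k).card : ℝ)) / (n : ℝ) ^ ((2 : ℤ) - (k : ℤ)))
      Filter.atTop (nhds 0) := by
  obtain ⟨j, rfl⟩ : ∃ j, k = j + 2 := ⟨k - 2, by omega⟩
  have hupper : ∀ n : ℕ, 1 ≤ n →
      ((((accSet n (j + 2)).filter fun δ => HasM3 δ).card : ℝ) /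
          ((accSet n (j + 2)).card : ℝ)) / (n : ℝ) ^ ((2 : ℤ) - ((j + 2 : ℕ) : ℤ)) ≤
        2 / (n : ℝ) := by
    intro n hn
    set Sc := (((accSet n (j + 2)).filter fun δ => HasM3 δ).card) with hSc
    set Ac := ((accSet n (j + 2)).card) with hAc
    have hcount : Sc * (n ^ (j + 2) * n ^ (j + 2)) ≤ (n ^ 3 + 1) * Ac := main_count n (j + 2)
    have hA : 0 < Ac := accSet_card_pos n (j + 2) hn (by omega)
    have hnat : Sc * n ^ (j + 1) ≤ 2 * Ac := by
      have e : n ^ (j + 2) * n ^ (j + 2) = n ^ (j + 1) * n ^ (j + 3) := by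
        rw [← pow_add, ← pow_add]; congr 1; omega
      have h3 : n ^ 3 ≤ n ^ (j + 3) := Nat.pow_le_pow_right hn (by omega)
      have hchain : Sc * n ^ (j + 1) * n ^ 3 ≤ 2 * Ac * n ^ 3 := by
        calc Sc * n ^ (j + 1) * n ^ 3 ≤ Sc * n ^ (j + 1) * n ^ (j + 3) :=
              Nat.mul_le_mul (Nat.le_refl _) h3
          _ = Sc * (n ^ (j + 2) * n ^ (j + 2)) := by rw [e]; ring
          _ ≤ (n ^ 3 + 1) * Ac := hcount
          _ ≤ (2 * n ^ 3) * Ac := by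
              have h1 : 1 ≤ n ^ 3 := Nat.one_le_pow _ _ hn
              exact Nat.mul_le_mul (by omega) (Nat.le_refl _)
          _ = 2 * Ac * n ^ 3 := by ring
      have hpos3 : 0 < n ^ 3 := Nat.pow_pos hn
      exact Nat.le_of_mul_le_mul_right hchain hpos3
    have hz : ((2 : ℤ) - ((j + 2 : ℕ) : ℤ)) = -(j : ℤ) := by push_cast; ring
    rw [hz, zpow_neg, zpow_natCast, div_inv_eq_mul, div_mul_eq_mul_div]
    have hApos : (0 : ℝ) < (Ac : ℝ) := by exact_mod_cast hA
    have hnpos : (0 : ℝ) < (n : ℝ) := by exact_mod_cast hn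
    rw [div_le_div_iff₀ hApos hnpos]
    calc (Sc : ℝ) * (n : ℝ) ^ j * (n : ℝ) = ((Sc * n ^ (j + 1) : ℕ) : ℝ) := by
          push_cast; ring
      _ ≤ ((2 * Ac : ℕ) : ℝ) := by exact_mod_cast hnat
      _ = 2 * (Ac : ℝ) := by push_cast; ring
  have hzero : Filter.Tendsto (fun _ : ℕ => (0 : ℝ)) Filter.atTop (nhds 0) :=
    tendsto_const_nhds
  apply tendsto_of_tendsto_of_tendsto_of_le_of_le' hzero
    (tendsto_const_div_atTop_nhds_zero_nat 2)
  · filter_upwards with n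
    have h1 : (0 : ℝ) ≤ (((accSet n (j + 2)).filter fun δ => HasM3 δ).card : ℝ) /
        ((accSet n (j + 2)).card : ℝ) := by positivity
    have h2 : (0 : ℝ) ≤ (n : ℝ) ^ ((2 : ℤ) - ((j + 2 : ℕ) : ℤ)) :=
      zpow_nonneg (Nat.cast_nonneg n) _
    exact div_nonneg h1 h2
  · filter_upwards [Filter.eventually_ge_atTop 1] with n hn using hupper n hn



end ArxivAutomata
end

section
/- Fix integers M ≥ n ≥ 1 and let x : [n] → [M] be strictly increasing with x(1) = 1; extend it by setting x(n+1) = M+1. Then the number of tableaux T ∈ 𝒯[M×n] whose backbone is x (i.e., with x_T(y) = x(y) for all y ∈ [n]) equals the product over y from 1 to n of y^{c_y}, where c_y = x(y+1) - x(y) - 1. -/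
open scoped Classical BigOperators

namespace ArxivAutomata

/-- For `T : Fin M → Fin n` and a row `y`, the 1-based position
`x_T(y) = min T⁻¹(y)` of the first (red) mark in row `y`
(columns are numbered `1, …, M`). -/
noncomputable def xT {M n : ℕ} (T : Fin M → Fin n) (y : Fin n) : ℕ :=
  sInf {x : ℕ | ∃ hx : x - 1 < M, 1 ≤ x ∧ T ⟨x - 1, hx⟩ = y}

/-- A tableau in `𝒯[M × n]`: a surjection `T : [M] → [n]` whose first-preimage
function `x_T` is strictly increasing. -/
def IsTableau {M n : ℕ} (T : Fin M → Fin n) : Prop :=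
  Function.Surjective T ∧ StrictMono fun y : Fin n => xT T y

/-- The finite set `𝒯[M × n]` of tableaux. -/
noncomputable def tabSet (M n : ℕ) : Finset (Fin M → Fin n) :=
  Finset.univ.filter fun T => IsTableau T

/-- The finite set `𝒯[M × n; f]` of tableaux whose backbone is dominated by
`f : [n] → [M]` (with rows indexed by `Fin n`, `f y` bounding row `y+1`). -/
noncomputable def tabSetLe (M n : ℕ) (f : Fin n → ℕ) : Finset (Fin M → Fin n) :=
  Finset.univ.filter fun T => IsTableau T ∧ ∀ y : Fin n, xT T y ≤ f y

/-- `xT T (T p)` is at most the (1-based) position `p+1`. -/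
lemma xT_le_pos {M n : ℕ} (T : Fin M → Fin n) (p : Fin M) :
    xT T (T p) ≤ (p : ℕ) + 1 := by
  apply Nat.sInf_le
  refine ⟨by simp, by omega, ?_⟩
  exact congrArg T (Fin.ext (by simp))

/-- Count of elements of `Fin n` with value below `y ≤ n`. -/
lemma card_filter_val_lt (n y : ℕ) (h : y ≤ n) :
    (Finset.univ.filter fun v : Fin n => (v : ℕ) < y).card = y := by
  have : (Finset.univ.filter fun v : Fin n => (v : ℕ) < y).card = (Finset.range y).card := by
    refine Finset.card_bij (fun v _ => (v : ℕ)) ?_ ?_ ?_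
    · intro v hv
      simp only [Finset.mem_filter] at hv
      simpa using hv.2
    · intro a ha b hb hab
      exact Fin.ext hab
    · intro b hb
      simp only [Finset.mem_range] at hb
      exact ⟨⟨b, lt_of_lt_of_le hb h⟩, by simp [hb], rfl⟩
  simpa using this

/-- A chain of one-step inequalities gives monotonicity. -/
lemma mono_chain (x : ℕ → ℕ) (a : ℕ) :
    ∀ b, a ≤ b → (∀ y, a ≤ y → y < b → x y ≤ x (y + 1)) → x a ≤ x b := by
  intro b
  induction b with
  | zero => intro hab _; interval_cases a; rfl
  | succ b ih =>
    intro hab hstep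
    rcases Nat.lt_or_ge a (b + 1) with h1 | h1
    · have : x a ≤ x b := ih (by omega) (fun y hy1 hy2 => hstep y hy1 (by omega))
      exact this.trans (hstep b (by omega) (by omega))
    · have : a = b + 1 := by omega
      subst this; rfl

/-- Telescoping a product over `Ico (x a) (x b)` into blocks. -/
lemma prod_blocks (f : ℕ → ℕ) (x : ℕ → ℕ) (a : ℕ) :
    ∀ b, a ≤ b → (∀ y, a ≤ y → y < b → x y ≤ x (y + 1)) →
      (∏ q ∈ Finset.Ico (x a) (x b), f q) =
        ∏ y ∈ Finset.Ico a b, ∏ q ∈ Finset.Ico (x y) (x (y + 1)), f q := by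
  intro b
  induction b with
  | zero =>
    intro hab _
    interval_cases a
    simp
  | succ b ih =>
    intro hab hstep
    rcases Nat.lt_or_ge a (b + 1) with hlt | hge
    · have hab' : a ≤ b := by omega
      have hmon : x a ≤ x b :=
        mono_chain x a b hab' (fun y hy1 hy2 => hstep y hy1 (by omega))
      rw [← Finset.prod_Ico_consecutive f hmon (hstep b hab' (by omega)),
        ih hab' (fun y hy1 hy2 => hstep y hy1 (by omega)),
        Finset.prod_Ico_succ_top hab']
    · have : a = b + 1 := by omega
      subst this
      simp

/-- Let `x : [n] → [M]` be strictly increasing with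
`x(1) = 1`, extended by `x(n+1) = M+1`.  The number of tableaux in `𝒯[M×n]`
with backbone `x` equals `∏_{y=1}^{n} y^{c_y}` with `c_y = x(y+1) - x(y) - 1`. -/
theorem statement16 (M n : ℕ) (hn : 1 ≤ n) (hM : n ≤ M)
    (x : ℕ → ℕ) (hx1 : x 1 = 1) (hxM : x (n + 1) = M + 1)
    (hmono : StrictMonoOn x (Set.Icc 1 (n + 1)))
    (hxle : ∀ y ∈ Set.Icc 1 n, x y ≤ M) :
    (((tabSet M n).filter fun T => ∀ y : Fin n, xT T y = x ((y : ℕ) + 1)).card) =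
      ∏ y ∈ Finset.Icc 1 n, y ^ (x (y + 1) - x y - 1) := by
  -- the monotone version of `hmono`
  have hmon : ∀ a b : ℕ, 1 ≤ a → a ≤ b → b ≤ n + 1 → x a ≤ x b := by
    intro a b ha hab hb
    exact hmono.monotoneOn ⟨ha, by omega⟩ ⟨by omega, hb⟩ hab
  have hstrict : ∀ a b : ℕ, 1 ≤ a → a < b → b ≤ n + 1 → x a < x b := by
    intro a b ha hab hb
    exact hmono ⟨ha, by omega⟩ ⟨by omega, hb⟩ hab
  have hx_ge_one : ∀ a : ℕ, 1 ≤ a → a ≤ n + 1 → 1 ≤ x a := by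
    intro a ha hb
    calc 1 = x 1 := hx1.symm
    _ ≤ x a := hmon 1 a le_rfl ha hb
  -- the per-position constraint set
  set S : Fin M → Finset (Fin n) := fun p =>
    Finset.univ.filter fun v : Fin n =>
      x ((v : ℕ) + 1) ≤ (p : ℕ) + 1 ∧
        ∀ y' ∈ Finset.Icc 1 n, x y' = (p : ℕ) + 1 → (v : ℕ) = y' - 1 with hS
  -- Step 1: the filtered set is the piFinset of S
  have hset : ((tabSet M n).filter fun T => ∀ y : Fin n, xT T y = x ((y : ℕ) + 1)) =
      Fintype.piFinset S := by
    ext T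
    simp only [tabSet, Finset.mem_filter, Finset.mem_univ, true_and,
      Fintype.mem_piFinset, hS]
    constructor
    · rintro ⟨⟨hsurj, _⟩, hback⟩ p
      constructor
      · -- value constraint
        have := xT_le_pos T p
        rwa [hback (T p)] at this
      · -- backbone position constraint
        intro y' hy' hxy'
        simp only [Finset.mem_Icc] at hy'
        set i : Fin n := ⟨y' - 1, by omega⟩ with hi
        have hxi : xT T i = (p : ℕ) + 1 := by
          have := hback i
          rw [this, hi]
          simp only
          rw [show y' - 1 + 1 = y' by omega, hxy']
        have hne : {z : ℕ | ∃ hz : z - 1 < M, 1 ≤ z ∧ T ⟨z - 1, hz⟩ = i}.Nonempty := by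
          obtain ⟨q, hq⟩ := hsurj i
          exact ⟨(q : ℕ) + 1, by simp, by omega, hq⟩
        have hmem := Nat.sInf_mem hne
        rw [show sInf {z : ℕ | ∃ hz : z - 1 < M, 1 ≤ z ∧ T ⟨z - 1, hz⟩ = i} = xT T i from rfl,
          hxi] at hmem
        obtain ⟨hz, -, hTz⟩ := hmem
        have hTp : T p = i := hTz
        rw [hTp, hi]
    · intro hC
      -- each position satisfies its constraint; derive everything
      have hC' : ∀ p : Fin M, x ((T p : ℕ) + 1) ≤ (p : ℕ) + 1 ∧
          ∀ y' ∈ Finset.Icc 1 n, x y' = (p : ℕ) + 1 → (T p : ℕ) = y' - 1 := by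
        intro p
        have := hC p
        simpa only [Finset.mem_filter, Finset.mem_univ, true_and] using this
      -- at each backbone position x(i+1) the value is forced to be i
      have hforced : ∀ i : Fin n, ∃ h : x ((i : ℕ) + 1) - 1 < M,
          T ⟨x ((i : ℕ) + 1) - 1, h⟩ = i := by
        intro i
        have hi1 : 1 ≤ (i : ℕ) + 1 := by omega
        have hin : (i : ℕ) + 1 ≤ n := i.isLt
        have hq1 : 1 ≤ x ((i : ℕ) + 1) := hx_ge_one _ hi1 (by omega)
        have hqM : x ((i : ℕ) + 1) ≤ M := hxle _ ⟨hi1, hin⟩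
        refine ⟨by omega, ?_⟩
        have := (hC' ⟨x ((i : ℕ) + 1) - 1, by omega⟩).2 ((i : ℕ) + 1)
          (Finset.mem_Icc.mpr ⟨hi1, hin⟩)
          (show x ((i : ℕ) + 1) = x ((i : ℕ) + 1) - 1 + 1 by omega)
        exact Fin.ext (by simpa using this)
      have hback : ∀ i : Fin n, xT T i = x ((i : ℕ) + 1) := by
        intro i
        obtain ⟨hlt, hTi⟩ := hforced i
        have hq1 : 1 ≤ x ((i : ℕ) + 1) := hx_ge_one _ (by omega) (by have := i.isLt; omega)
        apply le_antisymm
        · exact Nat.sInf_le ⟨hlt, hq1, hTi⟩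
        · refine le_csInf ⟨x ((i : ℕ) + 1), hlt, hq1, hTi⟩ ?_
          rintro b ⟨hb, hb1, hTb⟩
          have := (hC' ⟨b - 1, hb⟩).1
          rw [hTb] at this
          simpa [Nat.sub_add_cancel hb1] using this
      refine ⟨⟨?_, ?_⟩, hback⟩
      · intro i
        obtain ⟨hlt, hTi⟩ := hforced i
        exact ⟨⟨x ((i : ℕ) + 1) - 1, hlt⟩, hTi⟩
      · intro i j hij
        simp only
        rw [hback i, hback j]
        exact hstrict _ _ (by omega) (by simpa using hij) (by have := j.isLt; omega)
  rw [hset, Fintype.card_piFinset]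
  -- Step 2: rewrite as a product over 1-based positions
  set F : ℕ → ℕ := fun q =>
    (Finset.univ.filter fun v : Fin n =>
      x ((v : ℕ) + 1) ≤ q ∧ ∀ y' ∈ Finset.Icc 1 n, x y' = q → (v : ℕ) = y' - 1).card with hF
  have hFdef : ∀ q, F q = (Finset.univ.filter fun v : Fin n =>
      x ((v : ℕ) + 1) ≤ q ∧ ∀ y' ∈ Finset.Icc 1 n, x y' = q → (v : ℕ) = y' - 1).card :=
    fun _ => rfl
  have hSF : ∀ p : Fin M, (S p).card = F ((p : ℕ) + 1) := fun p => rfl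
  rw [Finset.prod_congr rfl (fun p _ => hSF p)]
  have : (∏ p : Fin M, F ((p : ℕ) + 1)) = ∏ q ∈ Finset.Ico 1 (M + 1), F q := by
    rw [Finset.prod_Ico_eq_prod_range, Fin.prod_univ_eq_prod_range (fun k => F (k + 1))]
    simp [add_comm]
  rw [this]
  -- Step 3: partition into blocks
  have hblocks := prod_blocks F x 1 (n + 1) (by omega)
    (fun y hy1 hy2 => hmon y (y + 1) hy1 (by omega) (by omega))
  rw [hx1, hxM] at hblocks
  rw [hblocks, Finset.Ico_add_one_right_eq_Icc]
  -- Step 4: per-block computation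
  apply Finset.prod_congr rfl
  intro y hy
  simp only [Finset.mem_Icc] at hy
  obtain ⟨hy1, hyn⟩ := hy
  have hlt : x y < x (y + 1) := hstrict y (y + 1) hy1 (by omega) (by omega)
  rw [Finset.prod_eq_prod_Ico_succ_bot hlt]
  -- F at the backbone position is 1
  have hFxy : F (x y) = 1 := by
    have : (Finset.univ.filter fun v : Fin n =>
        x ((v : ℕ) + 1) ≤ x y ∧ ∀ y' ∈ Finset.Icc 1 n, x y' = x y → (v : ℕ) = y' - 1)
        = {(⟨y - 1, by omega⟩ : Fin n)} := by
      ext v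
      simp only [Finset.mem_filter, Finset.mem_univ, true_and, Finset.mem_singleton]
      constructor
      · rintro ⟨-, h2⟩
        exact Fin.ext (by simpa using h2 y (Finset.mem_Icc.mpr ⟨hy1, hyn⟩) rfl)
      · rintro rfl
        constructor
        · simp only
          rw [show y - 1 + 1 = y by omega]
        · intro y' hy' hxy'
          simp only [Finset.mem_Icc] at hy'
          have : y' = y := hmono.injOn ⟨hy'.1, by omega⟩ ⟨hy1, by omega⟩ hxy'
          simp [this]
    rw [hFdef, this, Finset.card_singleton]
  rw [hFxy, one_mul]
  -- F at non-backbone positions in the block is y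
  have hFq : ∀ q ∈ Finset.Ico (x y + 1) (x (y + 1)), F q = y := by
    intro q hq
    simp only [Finset.mem_Ico] at hq
    obtain ⟨hq1, hq2⟩ := hq
    have hnb : ∀ y' ∈ Finset.Icc 1 n, x y' ≠ q := by
      intro y' hy' hxy'
      simp only [Finset.mem_Icc] at hy'
      rcases Nat.lt_or_ge y' (y + 1) with h1 | h1
      · have : x y' ≤ x y := hmon y' y hy'.1 (by omega) (by omega)
        omega
      · have : x (y + 1) ≤ x y' := hmon (y + 1) y' (by omega) h1 (by omega)
        omega
    have : (Finset.univ.filter fun v : Fin n =>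
        x ((v : ℕ) + 1) ≤ q ∧ ∀ y' ∈ Finset.Icc 1 n, x y' = q → (v : ℕ) = y' - 1)
        = Finset.univ.filter fun v : Fin n => (v : ℕ) < y := by
      ext v
      simp only [Finset.mem_filter, Finset.mem_univ, true_and]
      constructor
      · rintro ⟨h1, -⟩
        by_contra hvy
        push_neg at hvy
        have : x (y + 1) ≤ x ((v : ℕ) + 1) :=
          hmon (y + 1) ((v : ℕ) + 1) (by omega) (by omega) (by have := v.isLt; omega)
        omega
      · intro hv
        constructor
        · have : x ((v : ℕ) + 1) ≤ x y := hmon ((v : ℕ) + 1) y (by omega) (by omega) (by omega)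
          omega
        · intro y' hy' hxy'
          exact absurd hxy' (hnb y' hy')
    rw [hFdef, this]
    exact card_filter_val_lt n y hyn
  rw [Finset.prod_congr rfl hFq, Finset.prod_const, Nat.card_Ico, Nat.sub_sub]

end ArxivAutomata
end

section
/- Fix an integer k ≥ 2 and set C = 1 + (k+1)^{2k}/(2·(k-1)!). For all sufficiently large n, the probability that a uniformly random k-map δ : [n] × [k] → [n] has a sink state or a sink pair is at most C·n^{1-k}. -/
open scoped Classical BigOperators

namespace ArxivAutomata

/-- A state `i` is a sink state of the `k`-map `δ`: `δ_a(i) = i` for all `a`. -/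
def SinkState {n k : ℕ} (δ : Fin n → Fin k → Fin n) (i : Fin n) : Prop :=
  ∀ a : Fin k, δ i a = i

/-- The set `N_{ij} = {i, j, δ_1(i), δ_1(j), …, δ_k(i), δ_k(j)}`. -/
noncomputable def nbhd {n k : ℕ} (δ : Fin n → Fin k → Fin n) (i j : Fin n) :
    Finset (Fin n) :=
  {i, j} ∪ Finset.image (δ i) Finset.univ ∪ Finset.image (δ j) Finset.univ

/-- Two distinct states `i, j` form a sink pair if `|N_{ij}| ≤ k + 1`. -/
def SinkPair {n k : ℕ} (δ : Fin n → Fin k → Fin n) (i j : Fin n) : Prop :=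
  i ≠ j ∧ (nbhd δ i j).card ≤ k + 1

/-- For `k ≥ 2` and `C = 1 + (k+1)^{2k}/(2 (k-1)!)`, for all
sufficiently large `n` the probability that a uniformly random `k`-map on `n`
states has a sink state or a sink pair is at most `C n^{1-k}`. -/
theorem statement17 (k : ℕ) (hk : 2 ≤ k) :
    ∀ᶠ n : ℕ in Filter.atTop,
      (((Finset.univ.filter fun δ : Fin n → Fin k → Fin n =>
            (∃ i, SinkState δ i) ∨ ∃ i j, SinkPair δ i j).card : ℝ) /
          (Fintype.card (Fin n → Fin k → Fin n) : ℝ)) ≤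
        (1 + ((k : ℝ) + 1) ^ (2 * k) / (2 * ((k - 1).factorial : ℝ))) *
          (n : ℝ) ^ ((1 : ℤ) - (k : ℤ)) := by
  filter_upwards [Filter.eventually_ge_atTop (k + 2)] with n hn
  have hn2 : 2 ≤ n := by omega
  have hnpos : 0 < n := by omega
  set M : ℕ := n ^ k with hM
  have hMpos : 0 < M := Nat.pow_pos hnpos
  have hcardΩ : Fintype.card (Fin n → Fin k → Fin n) = M ^ n := by
    rw [Fintype.card_fun, Fintype.card_fun]
    simp [hM]
  -- the card of universe of `Fin k → Fin n`
  have hunivcard : (Finset.univ : Finset (Fin k → Fin n)).card = M := by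
    rw [Finset.card_univ, Fintype.card_fun]; simp [hM]
  -- ### Sink state bound
  have hA1 : ∀ i : Fin n,
      (Finset.univ.filter fun δ : Fin n → Fin k → Fin n => SinkState δ i).card
        = M ^ (n - 1) := by
    intro i
    have hset : (Finset.univ.filter fun δ : Fin n → Fin k → Fin n => SinkState δ i)
        = Fintype.piFinset (fun l : Fin n =>
            if l = i then ({fun _ => i} : Finset (Fin k → Fin n)) else Finset.univ) := by
      ext δ
      simp only [Finset.mem_filter, Finset.mem_univ, true_and, Fintype.mem_piFinset]
      simp only [SinkState]
      constructor
      · intro h l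
        by_cases hl : l = i
        · subst hl
          simp only [if_pos, Finset.mem_singleton, eq_self_iff_true, if_true]
          funext a; exact h a
        · simp [hl]
      · intro h a
        have hi := h i
        simp only [eq_self_iff_true, if_true, Finset.mem_singleton] at hi
        exact congrFun hi a
    rw [hset, Fintype.card_piFinset]
    rw [← Finset.mul_prod_erase _ _ (Finset.mem_univ i)]
    have h1 : (if i = i then ({fun _ => i} : Finset (Fin k → Fin n)) else Finset.univ).card
        = 1 := by simp
    rw [h1, one_mul]
    have h2 : ∀ l ∈ Finset.univ.erase i,
        (if l = i then ({fun _ => i} : Finset (Fin k → Fin n)) else Finset.univ).card = M := by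
      intro l hl
      rw [if_neg (Finset.mem_erase.1 hl).1, hunivcard]
    rw [Finset.prod_congr rfl h2, Finset.prod_const, Finset.card_erase_of_mem (Finset.mem_univ i),
      Finset.card_univ, Fintype.card_fin]
  have hA : (Finset.univ.filter fun δ : Fin n → Fin k → Fin n => ∃ i, SinkState δ i).card
      ≤ n * M ^ (n - 1) := by
    have hsub : (Finset.univ.filter fun δ : Fin n → Fin k → Fin n => ∃ i, SinkState δ i)
        ⊆ Finset.univ.biUnion (fun i : Fin n =>
            Finset.univ.filter fun δ : Fin n → Fin k → Fin n => SinkState δ i) := by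
      intro δ hδ
      simp only [Finset.mem_filter, Finset.mem_univ, true_and] at hδ
      obtain ⟨i, hi⟩ := hδ
      exact Finset.mem_biUnion.2 ⟨i, Finset.mem_univ _, by
        simp only [Finset.mem_filter, Finset.mem_univ, true_and]; exact hi⟩
    calc (Finset.univ.filter fun δ : Fin n → Fin k → Fin n => ∃ i, SinkState δ i).card
        ≤ (Finset.univ.biUnion (fun i : Fin n =>
            Finset.univ.filter fun δ : Fin n → Fin k → Fin n => SinkState δ i)).card :=
          Finset.card_le_card hsub
      _ ≤ ∑ i : Fin n,
            (Finset.univ.filter fun δ : Fin n → Fin k → Fin n => SinkState δ i).card :=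
          Finset.card_biUnion_le
      _ = n * M ^ (n - 1) := by
          rw [Finset.sum_congr rfl fun i _ => hA1 i, Finset.sum_const, Finset.card_univ,
            Fintype.card_fin, smul_eq_mul]
  -- ### Sink pair bound for a fixed pair
  have hpair : ∀ i j : Fin n, i ≠ j →
      (Finset.univ.filter fun δ : Fin n → Fin k → Fin n => SinkPair δ i j).card
        ≤ (n - 2).choose (k - 1) * ((k + 1) ^ (2 * k) * M ^ (n - 2)) := by
    intro i j hij
    set R : Finset (Fin n) := Finset.univ \ {i, j} with hR
    have hpair2 : ({i, j} : Finset (Fin n)).card = 2 := by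
      rw [Finset.card_insert_of_notMem (by simp [hij]), Finset.card_singleton]
    have hRcard : R.card = n - 2 := by
      rw [hR, Finset.card_sdiff_of_subset (Finset.subset_univ _), hpair2, Finset.card_univ,
        Fintype.card_fin]
    have hcov : (Finset.univ.filter fun δ : Fin n → Fin k → Fin n => SinkPair δ i j)
        ⊆ (R.powersetCard (k - 1)).biUnion (fun S =>
            Finset.univ.filter fun δ : Fin n → Fin k → Fin n =>
              ∀ a, δ i a ∈ insert i (insert j S) ∧ δ j a ∈ insert i (insert j S)) := by
      intro δ hδ
      simp only [Finset.mem_filter, Finset.mem_univ, true_and] at hδ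
      simp only [SinkPair] at hδ
      obtain ⟨-, hcard⟩ := hδ
      have hij_sub : ({i, j} : Finset (Fin n)) ⊆ nbhd δ i j := fun x hx =>
        Finset.mem_union_left _ (Finset.mem_union_left _ hx)
      have h1 : (nbhd δ i j \ {i, j}).card ≤ k - 1 := by
        rw [Finset.card_sdiff_of_subset hij_sub, hpair2]; omega
      have h2 : nbhd δ i j \ {i, j} ⊆ R := by
        intro x hx
        rw [Finset.mem_sdiff] at hx
        exact Finset.mem_sdiff.2 ⟨Finset.mem_univ _, hx.2⟩
      obtain ⟨S, hS1, hS2, hS3⟩ := Finset.exists_subsuperset_card_eq h2 h1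
        (by rw [hRcard]; omega)
      refine Finset.mem_biUnion.2 ⟨S, Finset.mem_powersetCard.2 ⟨hS2, hS3⟩, ?_⟩
      simp only [Finset.mem_filter, Finset.mem_univ, true_and]
      have key : ∀ x ∈ nbhd δ i j, x ∈ insert i (insert j S) := by
        intro x hx
        by_cases hxi : x = i
        · simp [hxi]
        by_cases hxj : x = j
        · simp [hxj]
        have hxm : x ∈ nbhd δ i j \ {i, j} := Finset.mem_sdiff.2 ⟨hx, by simp [hxi, hxj]⟩
        exact Finset.mem_insert_of_mem (Finset.mem_insert_of_mem (hS1 hxm))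
      intro a
      refine ⟨key _ ?_, key _ ?_⟩
      · exact Finset.mem_union_left _
          (Finset.mem_union_right _ (Finset.mem_image_of_mem _ (Finset.mem_univ a)))
      · exact Finset.mem_union_right _ (Finset.mem_image_of_mem _ (Finset.mem_univ a))
    have hS_bound : ∀ S ∈ R.powersetCard (k - 1),
        (Finset.univ.filter fun δ : Fin n → Fin k → Fin n =>
            ∀ a, δ i a ∈ insert i (insert j S) ∧ δ j a ∈ insert i (insert j S)).card
          ≤ (k + 1) ^ (2 * k) * M ^ (n - 2) := by
      intro S hS
      obtain ⟨hSR, hScard⟩ := Finset.mem_powersetCard.1 hS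
      set T : Finset (Fin n) := insert i (insert j S) with hT
      have hTcard : T.card ≤ k + 1 := by
        have c1 := Finset.card_insert_le i (insert j S)
        have c2 := Finset.card_insert_le j S
        rw [hT]; omega
      set P : Finset (Fin k → Fin n) := Fintype.piFinset (fun _ : Fin k => T) with hP
      have hPcard : P.card = T.card ^ k := by
        rw [hP, Fintype.card_piFinset]
        simp
      have hset : (Finset.univ.filter fun δ : Fin n → Fin k → Fin n =>
            ∀ a, δ i a ∈ T ∧ δ j a ∈ T)
          = Fintype.piFinset (fun l : Fin n => if l = i ∨ l = j then P else Finset.univ) := by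
        ext δ
        simp only [Finset.mem_filter, Finset.mem_univ, true_and, Fintype.mem_piFinset]
        constructor
        · intro h l
          by_cases hl : l = i ∨ l = j
          · rw [if_pos hl]
            rcases hl with hl | hl <;> subst hl <;>
              exact Fintype.mem_piFinset.2 (fun a => by
                first
                | exact (h a).1
                | exact (h a).2)
          · rw [if_neg hl]; exact Finset.mem_univ _
        · intro h a
          constructor
          · have := h i; rw [if_pos (Or.inl rfl)] at this
            exact Fintype.mem_piFinset.1 this a
          · have := h j; rw [if_pos (Or.inr rfl)] at this
            exact Fintype.mem_piFinset.1 this a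
      rw [hset, Fintype.card_piFinset]
      have hjmem : j ∈ Finset.univ.erase i := Finset.mem_erase.2 ⟨hij.symm, Finset.mem_univ _⟩
      rw [← Finset.mul_prod_erase _ _ (Finset.mem_univ i),
        ← Finset.mul_prod_erase _ _ (Finset.mem_erase.2
          ⟨hij.symm, Finset.mem_univ j⟩ : j ∈ Finset.univ.erase i)]
      have e1 : (if i = i ∨ i = j then P else Finset.univ).card = T.card ^ k := by
        rw [if_pos (Or.inl rfl), hPcard]
      have e2 : (if j = i ∨ j = j then P else Finset.univ).card = T.card ^ k := by
        rw [if_pos (Or.inr rfl), hPcard]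
      have e3 : ∀ l ∈ (Finset.univ.erase i).erase j,
          (if l = i ∨ l = j then P else Finset.univ).card = M := by
        intro l hl
        have h1 := Finset.mem_erase.1 hl
        have h2 := Finset.mem_erase.1 h1.2
        have hli : l ≠ i := h2.1
        have hlj : l ≠ j := h1.1
        rw [if_neg (by tauto), hunivcard]
      rw [e1, e2, Finset.prod_congr rfl e3, Finset.prod_const]
      have hcarderase : ((Finset.univ.erase i).erase j).card = n - 2 := by
        rw [Finset.card_erase_of_mem hjmem, Finset.card_erase_of_mem (Finset.mem_univ i),
          Finset.card_univ, Fintype.card_fin]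
        omega
      rw [hcarderase]
      have : T.card ^ k * (T.card ^ k * M ^ (n - 2)) = T.card ^ (2 * k) * M ^ (n - 2) := by
        rw [two_mul, pow_add]; ring
      rw [this]
      exact Nat.mul_le_mul_right _ (Nat.pow_le_pow_left hTcard _)
    calc (Finset.univ.filter fun δ : Fin n → Fin k → Fin n => SinkPair δ i j).card
        ≤ ((R.powersetCard (k - 1)).biUnion (fun S =>
            Finset.univ.filter fun δ : Fin n → Fin k → Fin n =>
              ∀ a, δ i a ∈ insert i (insert j S) ∧ δ j a ∈ insert i (insert j S))).card :=
          Finset.card_le_card hcov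
      _ ≤ ∑ S ∈ R.powersetCard (k - 1),
            (Finset.univ.filter fun δ : Fin n → Fin k → Fin n =>
              ∀ a, δ i a ∈ insert i (insert j S) ∧ δ j a ∈ insert i (insert j S)).card :=
          Finset.card_biUnion_le
      _ ≤ ∑ _S ∈ R.powersetCard (k - 1), (k + 1) ^ (2 * k) * M ^ (n - 2) :=
          Finset.sum_le_sum hS_bound
      _ = (n - 2).choose (k - 1) * ((k + 1) ^ (2 * k) * M ^ (n - 2)) := by
          rw [Finset.sum_const, Finset.card_powersetCard, hRcard, smul_eq_mul]
  -- ### covering the pair event by ordered pairs with p.1 < p.2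
  have hBsub : (Finset.univ.filter fun δ : Fin n → Fin k → Fin n => ∃ i j, SinkPair δ i j)
      ⊆ (Finset.univ.filter fun p : Fin n × Fin n => p.1 < p.2).biUnion
          (fun p => Finset.univ.filter fun δ : Fin n → Fin k → Fin n => SinkPair δ p.1 p.2) := by
    intro δ hδ
    simp only [Finset.mem_filter, Finset.mem_univ, true_and] at hδ
    obtain ⟨i, j, hp⟩ := hδ
    have hsymm : SinkPair δ j i := by
      obtain ⟨hne, hcard⟩ := hp
      refine ⟨hne.symm, ?_⟩
      have hnb : nbhd δ j i = nbhd δ i j := by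
        unfold nbhd
        ext x
        simp only [Finset.mem_union, Finset.mem_insert, Finset.mem_singleton]
        tauto
      rw [hnb]; exact hcard
    rcases lt_or_gt_of_ne hp.1 with h | h
    · exact Finset.mem_biUnion.2 ⟨(i, j), by simp [h], by
        simp only [Finset.mem_filter, Finset.mem_univ, true_and]; exact hp⟩
    · exact Finset.mem_biUnion.2 ⟨(j, i), by simp [h], by
        simp only [Finset.mem_filter, Finset.mem_univ, true_and]; exact hsymm⟩
  -- number of ordered pairs with p.1 < p.2
  have hpairs : 2 * (Finset.univ.filter fun p : Fin n × Fin n => p.1 < p.2).card ≤ n * n := by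
    have himg : (Finset.univ.filter fun p : Fin n × Fin n => p.1 < p.2).image Prod.swap
        = Finset.univ.filter fun p : Fin n × Fin n => p.2 < p.1 := by
      ext p
      simp only [Finset.mem_image, Finset.mem_filter, Finset.mem_univ, true_and]
      constructor
      · rintro ⟨q, hq, rfl⟩; exact hq
      · intro h; exact ⟨(p.2, p.1), h, rfl⟩
    have hcardeq : (Finset.univ.filter fun p : Fin n × Fin n => p.2 < p.1).card
        = (Finset.univ.filter fun p : Fin n × Fin n => p.1 < p.2).card := by
      rw [← himg, Finset.card_image_of_injective _ Prod.swap_injective]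
    have hdisj : Disjoint (Finset.univ.filter fun p : Fin n × Fin n => p.1 < p.2)
        (Finset.univ.filter fun p : Fin n × Fin n => p.2 < p.1) := by
      rw [Finset.disjoint_filter]
      intro p _ h1 h2
      exact absurd h2 (not_lt_of_gt h1)
    have hun := Finset.card_union_of_disjoint hdisj
    have hle : ((Finset.univ.filter fun p : Fin n × Fin n => p.1 < p.2)
        ∪ Finset.univ.filter fun p : Fin n × Fin n => p.2 < p.1).card
        ≤ Fintype.card (Fin n × Fin n) := by
      rw [← Finset.card_univ]; exact Finset.card_le_card (Finset.subset_univ _)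
    rw [hun, hcardeq] at hle
    simpa [Fintype.card_prod, two_mul] using hle
  -- total bound on the pair event
  have hB : (Finset.univ.filter fun δ : Fin n → Fin k → Fin n => ∃ i j, SinkPair δ i j).card
      ≤ (Finset.univ.filter fun p : Fin n × Fin n => p.1 < p.2).card
          * ((n - 2).choose (k - 1) * ((k + 1) ^ (2 * k) * M ^ (n - 2))) := by
    calc (Finset.univ.filter fun δ : Fin n → Fin k → Fin n => ∃ i j, SinkPair δ i j).card
        ≤ ((Finset.univ.filter fun p : Fin n × Fin n => p.1 < p.2).biUnion
            (fun p => Finset.univ.filter fun δ : Fin n → Fin k → Fin n =>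
              SinkPair δ p.1 p.2)).card := Finset.card_le_card hBsub
      _ ≤ ∑ p ∈ Finset.univ.filter fun p : Fin n × Fin n => p.1 < p.2,
            (Finset.univ.filter fun δ : Fin n → Fin k → Fin n => SinkPair δ p.1 p.2).card :=
          Finset.card_biUnion_le
      _ ≤ ∑ p ∈ Finset.univ.filter fun p : Fin n × Fin n => p.1 < p.2,
            ((n - 2).choose (k - 1) * ((k + 1) ^ (2 * k) * M ^ (n - 2))) := by
          refine Finset.sum_le_sum ?_
          intro p hp
          simp only [Finset.mem_filter, Finset.mem_univ, true_and] at hp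
          exact hpair p.1 p.2 (ne_of_lt hp)
      _ = _ := by rw [Finset.sum_const, smul_eq_mul]
  -- ### split the main event
  have hsplit : (Finset.univ.filter fun δ : Fin n → Fin k → Fin n =>
        (∃ i, SinkState δ i) ∨ ∃ i j, SinkPair δ i j).card
      ≤ (Finset.univ.filter fun δ : Fin n → Fin k → Fin n => ∃ i, SinkState δ i).card
        + (Finset.univ.filter fun δ : Fin n → Fin k → Fin n => ∃ i j, SinkPair δ i j).card := by
    rw [Finset.filter_or]
    exact Finset.card_union_le _ _
  -- ### pass to the reals
  have hx : (0 : ℝ) < (n : ℝ) := by exact_mod_cast hnpos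
  have hF : (0 : ℝ) < ((k - 1).factorial : ℝ) := by exact_mod_cast (k - 1).factorial_pos
  rw [hcardΩ]
  have hMn : (0 : ℝ) < ((M ^ n : ℕ) : ℝ) := by exact_mod_cast Nat.pow_pos hMpos
  rw [div_le_iff₀ hMn]
  -- the choose bound in ℝ
  have hchoose : (((n - 2).choose (k - 1) : ℕ) : ℝ) ≤ (n : ℝ) ^ (k - 1) / ((k - 1).factorial : ℝ) := by
    rw [le_div_iff₀ hF]
    have hnat : (k - 1).factorial * (n - 2).choose (k - 1) ≤ n ^ (k - 1) := by
      calc (k - 1).factorial * (n - 2).choose (k - 1) = (n - 2).descFactorial (k - 1) :=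
            (Nat.descFactorial_eq_factorial_mul_choose _ _).symm
        _ ≤ (n - 2) ^ (k - 1) := Nat.descFactorial_le_pow _ _
        _ ≤ n ^ (k - 1) := Nat.pow_le_pow_left (by omega) _
    calc (((n - 2).choose (k - 1) : ℕ) : ℝ) * ((k - 1).factorial : ℝ)
        = (((k - 1).factorial * (n - 2).choose (k - 1) : ℕ) : ℝ) := by push_cast; ring
      _ ≤ ((n ^ (k - 1) : ℕ) : ℝ) := by exact_mod_cast hnat
      _ = (n : ℝ) ^ (k - 1) := by push_cast; ring
  have hpairsR : ((Finset.univ.filter fun p : Fin n × Fin n => p.1 < p.2).card : ℝ)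
      ≤ (n : ℝ) ^ 2 / 2 := by
    rw [le_div_iff₀ (by norm_num : (0:ℝ) < 2)]
    have := hpairs
    calc ((Finset.univ.filter fun p : Fin n × Fin n => p.1 < p.2).card : ℝ) * 2
        = ((2 * (Finset.univ.filter fun p : Fin n × Fin n => p.1 < p.2).card : ℕ) : ℝ) := by
          push_cast; ring
      _ ≤ ((n * n : ℕ) : ℝ) := by exact_mod_cast hpairs
      _ = (n : ℝ) ^ 2 := by push_cast; ring
  -- main numeric estimate
  set B : ℝ := ((k : ℝ) + 1) ^ (2 * k) with hBdef
  have hBpos : (0 : ℝ) ≤ B := by positivity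
  have hMreal : ((M : ℕ) : ℝ) = (n : ℝ) ^ k := by push_cast [hM]; ring
  have hterm1 : ((n * M ^ (n - 1) : ℕ) : ℝ) = (n : ℝ) ^ (k * (n - 1) + 1) := by
    push_cast [hM]
    rw [← pow_mul, pow_succ]
    ring
  have hterm2 : (((Finset.univ.filter fun p : Fin n × Fin n => p.1 < p.2).card
        * ((n - 2).choose (k - 1) * ((k + 1) ^ (2 * k) * M ^ (n - 2))) : ℕ) : ℝ)
      ≤ (B / (2 * ((k - 1).factorial : ℝ))) * (n : ℝ) ^ (k * (n - 1) + 1) := by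
    have hMn2 : ((M ^ (n - 2) : ℕ) : ℝ) = (n : ℝ) ^ (k * (n - 2)) := by
      push_cast [hM]; rw [← pow_mul]
    have hkp1 : (((k + 1) ^ (2 * k) : ℕ) : ℝ) = B := by push_cast [hBdef]; ring
    push_cast
    calc ((Finset.univ.filter fun p : Fin n × Fin n => p.1 < p.2).card : ℝ)
          * (((n - 2).choose (k - 1) : ℝ) * (((k : ℝ) + 1) ^ (2 * k) * ((M : ℝ)) ^ (n - 2)))
        ≤ ((n : ℝ) ^ 2 / 2) * (((n : ℝ) ^ (k - 1) / ((k - 1).factorial : ℝ))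
            * (B * (n : ℝ) ^ (k * (n - 2)))) := by
          have h1 : ((M : ℝ)) ^ (n - 2) = (n : ℝ) ^ (k * (n - 2)) := by
            rw [hMreal, ← pow_mul]
          rw [h1, hBdef]
          have hc : (0:ℝ) ≤ ((n - 2).choose (k - 1) : ℝ) := by positivity
          have hprod : (0:ℝ) ≤ B * (n : ℝ) ^ (k * (n - 2)) := by positivity
          refine mul_le_mul hpairsR ?_ (by positivity) (by positivity)
          exact mul_le_mul hchoose le_rfl (by rw [← hBdef]; positivity) (by positivity)
      _ = (B / (2 * ((k - 1).factorial : ℝ)))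
            * ((n : ℝ) ^ 2 * ((n : ℝ) ^ (k - 1) * (n : ℝ) ^ (k * (n - 2)))) := by
          field_simp
      _ = (B / (2 * ((k - 1).factorial : ℝ))) * (n : ℝ) ^ (k * (n - 1) + 1) := by
          rw [← pow_add, ← pow_add]
          congr 2
          have h1 : k * (n - 1) = k * (n - 2) + k := by
            have h2 : n - 1 = (n - 2) + 1 := by omega
            rw [h2, Nat.mul_add, Nat.mul_one]
          rw [h1]
          generalize k * (n - 2) = m
          omega
  -- assemble
  have hnum : ((Finset.univ.filter fun δ : Fin n → Fin k → Fin n =>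
        (∃ i, SinkState δ i) ∨ ∃ i j, SinkPair δ i j).card : ℝ)
      ≤ (1 + B / (2 * ((k - 1).factorial : ℝ))) * (n : ℝ) ^ (k * (n - 1) + 1) := by
    calc ((Finset.univ.filter fun δ : Fin n → Fin k → Fin n =>
          (∃ i, SinkState δ i) ∨ ∃ i j, SinkPair δ i j).card : ℝ)
        ≤ ((n * M ^ (n - 1) : ℕ) : ℝ)
          + (((Finset.univ.filter fun p : Fin n × Fin n => p.1 < p.2).card
              * ((n - 2).choose (k - 1) * ((k + 1) ^ (2 * k) * M ^ (n - 2))) : ℕ) : ℝ) := by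
          have hNat := le_trans hsplit (Nat.add_le_add hA hB)
          exact_mod_cast hNat
      _ ≤ (n : ℝ) ^ (k * (n - 1) + 1)
            + (B / (2 * ((k - 1).factorial : ℝ))) * (n : ℝ) ^ (k * (n - 1) + 1) := by
          rw [hterm1]
          linarith [hterm2]
      _ = (1 + B / (2 * ((k - 1).factorial : ℝ))) * (n : ℝ) ^ (k * (n - 1) + 1) := by ring
  refine le_trans hnum ?_
  -- finally compare the right-hand sides
  have hrhs : (1 + B / (2 * ((k - 1).factorial : ℝ))) * (n : ℝ) ^ ((1 : ℤ) - (k : ℤ))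
      * ((M ^ n : ℕ) : ℝ)
      = (1 + B / (2 * ((k - 1).factorial : ℝ))) * (n : ℝ) ^ (k * (n - 1) + 1) := by
    have hz : (n : ℝ) ^ ((1 : ℤ) - (k : ℤ)) = (n : ℝ) / (n : ℝ) ^ k := by
      rw [zpow_sub₀ (ne_of_gt hx), zpow_one, zpow_natCast]
    have hMn' : ((M ^ n : ℕ) : ℝ) = (n : ℝ) ^ (k * n) := by
      push_cast [hM]; rw [← pow_mul]
    have hexp : k * (n - 1) + 1 + k = k * n + 1 := by
      have h1 : k * n = k * (n - 1) + k := by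
        have h2 : n = (n - 1) + 1 := by omega
        conv_lhs => rw [h2]
        rw [Nat.mul_add, Nat.mul_one]
      rw [h1]
      ring
    have hkey : (n : ℝ) / (n : ℝ) ^ k * (n : ℝ) ^ (k * n) = (n : ℝ) ^ (k * (n - 1) + 1) := by
      rw [div_mul_eq_mul_div, div_eq_iff (by positivity : ((n : ℝ) ^ k) ≠ 0), ← pow_add,
        hexp, pow_succ']
    rw [hz, hMn', mul_assoc, hkey]
  rw [hrhs]
end ArxivAutomata
end
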